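/- Let x = x₀ + ι(x̲) and s = s₀ + ι(s̲) be paravectors in the real Clifford algebra ℝ_n with s ∉ [x]. Then both elements x² - 2s₀·x + (s₀² + ‖s̲‖²) and s² - 2x₀·s + (x₀² + ‖x̲‖²) are units in ℝ_n, and the two forms of the right slice monogenic Cauchy kernel agree: (s² - 2x₀·s + (x₀² + ‖x̲‖²))⁻¹·(s - x̄) = -(x - s̄)·(x² - 2s₀·x + (s₀² + ‖s̲‖²))⁻¹. -/

import Mathlib

noncomputable section

open CliffordAlgebra

/-- The quadratic form `Q(v) = -‖v‖²` on `ℝⁿ`, whose Clifford algebra is `ℝ_n`. -/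
def cliffordQ (n : ℕ) : QuadraticForm ℝ (EuclideanSpace ℝ (Fin n)) :=
  -(LinearMap.BilinMap.toQuadraticMap (innerₗ (EuclideanSpace ℝ (Fin n))))

theorem cliffordQ_apply (n : ℕ) (v : EuclideanSpace ℝ (Fin n)) :
    cliffordQ n v = -(‖v‖ ^ 2) := by
  have : (innerₗ (EuclideanSpace ℝ (Fin n))) v v = ‖v‖ ^ 2 := by
    simpa [innerₗ_apply_apply] using real_inner_self_eq_norm_sq v
  simp [cliffordQ, QuadraticMap.neg_apply, LinearMap.BilinMap.toQuadraticMap_apply, this]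

section Aux

variable {A : Type*} [Ring A] [Algebra ℝ A]

theorem aux_key (a b : A) (x₀ s₀ ρ σ : ℝ)
    (ha : a * a = (-(ρ ^ 2)) • (1 : A)) (hb : b * b = (-(σ ^ 2)) • (1 : A)) :
    (s₀ • 1 + b - (x₀ • 1 - a)) *
      ((x₀ • 1 + a) ^ 2 - (2 * s₀) • (x₀ • (1 : A) + a) + (s₀ ^ 2 + σ ^ 2) • 1)
    = ((s₀ • 1 + b) ^ 2 - (2 * x₀) • (s₀ • (1 : A) + b) + (x₀ ^ 2 + ρ ^ 2) • 1) *
      (-(x₀ • 1 + a - (s₀ • 1 - b))) := by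
  simp only [sq, add_mul, mul_add, sub_mul, mul_sub, smul_mul_assoc, mul_smul_comm,
    neg_mul, mul_neg, one_mul, mul_one, ha, hb, smul_smul, neg_add, neg_sub, mul_neg_one]
  module

theorem aux_rep (a : A) (x₀ s₀ ρ σ : ℝ) (ha : a * a = (-(ρ ^ 2)) • (1 : A)) :
    (x₀ • 1 + a) ^ 2 - (2 * s₀) • (x₀ • (1 : A) + a) + (s₀ ^ 2 + σ ^ 2) • 1
      = ((x₀ - s₀) ^ 2 - ρ ^ 2 + σ ^ 2) • (1 : A) + (2 * (x₀ - s₀)) • a := by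
  simp only [sq, add_mul, mul_add, smul_mul_assoc, mul_smul_comm, one_mul, mul_one,
    ha, smul_smul]
  module

theorem aux_conj (a : A) (p q ρ : ℝ) (ha : a * a = (-(ρ ^ 2)) • (1 : A)) :
    (p • 1 + q • a) * (p • 1 + (-q) • a) = (p ^ 2 + q ^ 2 * ρ ^ 2) • (1 : A) := by
  simp only [add_mul, mul_add, smul_mul_assoc, mul_smul_comm, one_mul, mul_one, ha, smul_smul]
  module

theorem aux_conj' (a : A) (p q ρ : ℝ) (ha : a * a = (-(ρ ^ 2)) • (1 : A)) :
    (p • 1 + (-q) • a) * (p • 1 + q • a) = (p ^ 2 + q ^ 2 * ρ ^ 2) • (1 : A) := by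
  simp only [add_mul, mul_add, smul_mul_assoc, mul_smul_comm, one_mul, mul_one, ha, smul_smul]
  module

theorem aux_unit (a : A) (p q ρ D : ℝ) (ha : a * a = (-(ρ ^ 2)) • (1 : A))
    (hD : D = p ^ 2 + q ^ 2 * ρ ^ 2) (hD0 : D ≠ 0) :
    (p • 1 + q • a) * (D⁻¹ • (p • 1 + (-q) • a)) = 1 ∧
      (D⁻¹ • (p • 1 + (-q) • a)) * (p • 1 + q • a) = 1 := by
  constructor
  · rw [mul_smul_comm, aux_conj a p q ρ ha, smul_smul, ← hD, inv_mul_cancel₀ hD0, one_smul]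
  · rw [smul_mul_assoc, aux_conj' a p q ρ ha, smul_smul, ← hD, inv_mul_cancel₀ hD0, one_smul]

end Aux

theorem aux_D (α ρ σ : ℝ) (hρ : 0 ≤ ρ) (hσ : 0 ≤ σ) (h : ¬(α = 0 ∧ σ = ρ)) :
    (α ^ 2 - ρ ^ 2 + σ ^ 2) ^ 2 + (2 * α) ^ 2 * ρ ^ 2 ≠ 0 := by
  intro h0
  have h1 : α ^ 2 - ρ ^ 2 + σ ^ 2 = 0 := by
    nlinarith [sq_nonneg (α ^ 2 - ρ ^ 2 + σ ^ 2), mul_nonneg (sq_nonneg (2 * α)) (sq_nonneg ρ)]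
  have h2 : (2 * α) ^ 2 * ρ ^ 2 = 0 := by nlinarith [sq_nonneg (α ^ 2 - ρ ^ 2 + σ ^ 2)]
  rcases mul_eq_zero.1 h2 with h3 | h3
  · have hα : α = 0 := by nlinarith [sq_nonneg α]
    have hσρ : σ = ρ := by nlinarith [sq_nonneg (σ - ρ), sq_nonneg (σ + ρ)]
    exact h ⟨hα, hσρ⟩
  · have hρ0 : ρ = 0 := by nlinarith [sq_nonneg ρ]
    have hα : α = 0 := by nlinarith [sq_nonneg α, sq_nonneg σ]
    have hσ0 : σ = 0 := by nlinarith [sq_nonneg σ]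
    exact h ⟨hα, by rw [hσ0, hρ0]⟩

/-- For paravectors `x = x₀ + ι x̲` and `s = s₀ + ι s̲` in the real Clifford
algebra `ℝ_n` with `s ∉ [x]`, both `x² - 2s₀·x + (s₀² + ‖s̲‖²)` and
`s² - 2x₀·s + (x₀² + ‖x̲‖²)` are units, and the two forms of the right slice monogenic Cauchy
kernel agree:
`(s² - 2x₀·s + (x₀² + ‖x̲‖²))⁻¹ · (s - x̄) = -(x - s̄) · (x² - 2s₀·x + (s₀² + ‖s̲‖²))⁻¹`. -/
theorem right_cauchy_kernel_two_forms (n : ℕ) (hn : 1 ≤ n)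
    (x₀ s₀ : ℝ) (xv sv : EuclideanSpace ℝ (Fin n))
    (hsx : (s₀, ‖sv‖) ≠ (x₀, ‖xv‖)) :
    let ιQ := CliffordAlgebra.ι (cliffordQ n)
    let x : CliffordAlgebra (cliffordQ n) := algebraMap ℝ _ x₀ + ιQ xv
    let s : CliffordAlgebra (cliffordQ n) := algebraMap ℝ _ s₀ + ιQ sv
    let xbar : CliffordAlgebra (cliffordQ n) := algebraMap ℝ _ x₀ - ιQ xv
    let sbar : CliffordAlgebra (cliffordQ n) := algebraMap ℝ _ s₀ - ιQ sv
    let A : CliffordAlgebra (cliffordQ n) :=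
      x ^ 2 - (2 * s₀) • x + algebraMap ℝ _ (s₀ ^ 2 + ‖sv‖ ^ 2)
    let B : CliffordAlgebra (cliffordQ n) :=
      s ^ 2 - (2 * x₀) • s + algebraMap ℝ _ (x₀ ^ 2 + ‖xv‖ ^ 2)
    IsUnit A ∧ IsUnit B ∧
      Ring.inverse B * (s - xbar) = -((x - sbar) * Ring.inverse A) := by
  intro ιQ x s xbar sbar A B
  have ha : ιQ xv * ιQ xv = (-(‖xv‖ ^ 2)) • (1 : CliffordAlgebra (cliffordQ n)) := by
    rw [ι_sq_scalar, cliffordQ_apply, Algebra.algebraMap_eq_smul_one]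
  have hb : ιQ sv * ιQ sv = (-(‖sv‖ ^ 2)) • (1 : CliffordAlgebra (cliffordQ n)) := by
    rw [ι_sq_scalar, cliffordQ_apply, Algebra.algebraMap_eq_smul_one]
  -- representations of A and B
  have hArep : A = ((x₀ - s₀) ^ 2 - ‖xv‖ ^ 2 + ‖sv‖ ^ 2) • (1 : CliffordAlgebra (cliffordQ n))
      + (2 * (x₀ - s₀)) • ιQ xv := by
    show (algebraMap ℝ _ x₀ + ιQ xv) ^ 2 - (2 * s₀) • (algebraMap ℝ _ x₀ + ιQ xv)
        + algebraMap ℝ _ (s₀ ^ 2 + ‖sv‖ ^ 2) = _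
    simp only [Algebra.algebraMap_eq_smul_one]
    exact aux_rep (ιQ xv) x₀ s₀ ‖xv‖ ‖sv‖ ha
  have hBrep : B = ((s₀ - x₀) ^ 2 - ‖sv‖ ^ 2 + ‖xv‖ ^ 2) • (1 : CliffordAlgebra (cliffordQ n))
      + (2 * (s₀ - x₀)) • ιQ sv := by
    show (algebraMap ℝ _ s₀ + ιQ sv) ^ 2 - (2 * x₀) • (algebraMap ℝ _ s₀ + ιQ sv)
        + algebraMap ℝ _ (x₀ ^ 2 + ‖xv‖ ^ 2) = _
    simp only [Algebra.algebraMap_eq_smul_one]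
    exact aux_rep (ιQ sv) s₀ x₀ ‖sv‖ ‖xv‖ hb
  -- the discriminants
  set pA : ℝ := (x₀ - s₀) ^ 2 - ‖xv‖ ^ 2 + ‖sv‖ ^ 2 with hpA
  set qA : ℝ := 2 * (x₀ - s₀) with hqA
  set pB : ℝ := (s₀ - x₀) ^ 2 - ‖sv‖ ^ 2 + ‖xv‖ ^ 2 with hpB
  set qB : ℝ := 2 * (s₀ - x₀) with hqB
  have hDA : pA ^ 2 + qA ^ 2 * ‖xv‖ ^ 2 ≠ 0 := by
    have := aux_D (x₀ - s₀) ‖xv‖ ‖sv‖ (norm_nonneg _) (norm_nonneg _) ?_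
    · simpa [hpA, hqA] using this
    · rintro ⟨h1, h2⟩
      exact hsx (Prod.ext (by linarith) h2)
  have hDB : pB ^ 2 + qB ^ 2 * ‖sv‖ ^ 2 ≠ 0 := by
    have := aux_D (s₀ - x₀) ‖sv‖ ‖xv‖ (norm_nonneg _) (norm_nonneg _) ?_
    · simpa [hpB, hqB] using this
    · rintro ⟨h1, h2⟩
      exact hsx (Prod.ext (by linarith) h2.symm)
  -- units
  obtain ⟨hA1, hA2⟩ := aux_unit (ιQ xv) pA qA ‖xv‖ _ ha rfl hDA
  obtain ⟨hB1, hB2⟩ := aux_unit (ιQ sv) pB qB ‖sv‖ _ hb rfl hDB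
  rw [← hArep] at hA1 hA2
  rw [← hBrep] at hB1 hB2
  have hAunit : IsUnit A := ⟨⟨A, _, hA1, hA2⟩, rfl⟩
  have hBunit : IsUnit B := ⟨⟨B, _, hB1, hB2⟩, rfl⟩
  refine ⟨hAunit, hBunit, ?_⟩
  -- the key algebraic identity
  have key : (s - xbar) * A = B * (-(x - sbar)) := by
    show (algebraMap ℝ _ s₀ + ιQ sv - (algebraMap ℝ _ x₀ - ιQ xv)) *
        ((algebraMap ℝ _ x₀ + ιQ xv) ^ 2 - (2 * s₀) • (algebraMap ℝ _ x₀ + ιQ xv)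
          + algebraMap ℝ _ (s₀ ^ 2 + ‖sv‖ ^ 2))
      = ((algebraMap ℝ _ s₀ + ιQ sv) ^ 2 - (2 * x₀) • (algebraMap ℝ _ s₀ + ιQ sv)
          + algebraMap ℝ _ (x₀ ^ 2 + ‖xv‖ ^ 2)) *
        (-(algebraMap ℝ _ x₀ + ιQ xv - (algebraMap ℝ _ s₀ - ιQ sv)))
    simp only [Algebra.algebraMap_eq_smul_one]
    exact aux_key (ιQ xv) (ιQ sv) x₀ s₀ ‖xv‖ ‖sv‖ ha hb
  have hAc : A * Ring.inverse A = 1 := Ring.mul_inverse_cancel _ hAunit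
  have hBc : Ring.inverse B * B = 1 := Ring.inverse_mul_cancel _ hBunit
  calc Ring.inverse B * (s - xbar)
      = Ring.inverse B * ((s - xbar) * A * Ring.inverse A) := by
        rw [mul_assoc (s - xbar), hAc, mul_one]
    _ = Ring.inverse B * (B * (-(x - sbar)) * Ring.inverse A) := by rw [key]
    _ = (Ring.inverse B * B) * ((-(x - sbar)) * Ring.inverse A) := by noncomm_ring
    _ = -((x - sbar) * Ring.inverse A) := by rw [hBc, one_mul, neg_mul]

end
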